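/- A continuous function f : [0,∞) → ℝ is operator convex if and only if for all positive integers n ≤ k, every isometry V : ℂ^n → ℂ^k (i.e. V*V = I_n) and every positive semidefinite k×k complex matrix A, one has f(V*AV) ≼ V*·f(A)·V in the Loewner order. -/

import Mathlib

open Matrix
open scoped Kronecker ComplexOrder

noncomputable section

/-- A probability vector on a finite set. -/
def ProbVec {X : Type*} [Fintype X] (p : X → ℝ) : Prop :=
  (∀ x, 0 ≤ p x) ∧ ∑ x, p x = 1

/-- A density matrix: positive semidefinite with trace one. -/
def IsDensityMatrix {n : ℕ} (ρ : Matrix (Fin n) (Fin n) ℂ) : Prop :=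
  ρ.PosSemidef ∧ ρ.trace = 1

/-- The action of a classical-to-quantum channel, given by a family of density
matrices `ρ`, on a probability vector `p`. -/
def cqApply {X : Type*} [Fintype X] {n : ℕ} (ρ : X → Matrix (Fin n) (Fin n) ℂ)
    (p : X → ℝ) : Matrix (Fin n) (Fin n) ℂ :=
  ∑ x, (p x : ℂ) • ρ x

/-- The recession slope `lim_{λ → ∞} f(λ)/λ`, as an extended real number.
(For convex continuous `f` the limit exists and equals this limsup.) -/
def recessionSlope (f : ℝ → ℝ) : EReal :=
  Filter.limsup (fun lam : ℝ => ((f lam / lam : ℝ) : EReal)) Filter.atTop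

/-- The `f`-divergence of two probability vectors, valued in `ℝ ∪ {+∞}`
(with the convention `0 * ∞ = 0`, which holds for `EReal` multiplication). -/
def fDiv {X : Type*} [Fintype X] (f : ℝ → ℝ) (p0 p1 : X → ℝ) : EReal :=
  ((∑ x, if 0 < p1 x then p1 x * f (p0 x / p1 x) else 0 : ℝ) : EReal)
    + ((∑ x, if 0 < p1 x then 0 else p0 x : ℝ) : EReal) * recessionSlope f

/-- The maximal `f`-divergence: the infimum of `D_f(q0‖q1)` over all classical
families mapped onto `(σ0, σ1)` by some classical-to-quantum channel. -/
def DfMax {n : ℕ} (f : ℝ → ℝ) (σ0 σ1 : Matrix (Fin n) (Fin n) ℂ) : EReal :=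
  sInf { d : EReal |
    ∃ (m : ℕ) (q0 q1 : Fin m → ℝ) (ρ : Fin m → Matrix (Fin n) (Fin n) ℂ),
      ProbVec q0 ∧ ProbVec q1 ∧ (∀ x, IsDensityMatrix (ρ x)) ∧
      cqApply ρ q0 = σ0 ∧ cqApply ρ q1 = σ1 ∧ d = fDiv f q0 q1 }

/-- Spectral functional calculus for Hermitian matrices (junk value `0` on
non-Hermitian input). -/
def hermCFC {n : ℕ} (f : ℝ → ℝ) (A : Matrix (Fin n) (Fin n) ℂ) :
    Matrix (Fin n) (Fin n) ℂ :=
  if hA : A.IsHermitian then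
    (hA.eigenvectorUnitary : Matrix (Fin n) (Fin n) ℂ) *
      Matrix.diagonal (fun i => (f (hA.eigenvalues i) : ℂ)) *
      (star (hA.eigenvectorUnitary : Matrix (Fin n) (Fin n) ℂ))
  else 0

/-- Spectral pseudo-inverse: invert the nonzero eigenvalues. -/
def pinvMat {n : ℕ} (A : Matrix (Fin n) (Fin n) ℂ) : Matrix (Fin n) (Fin n) ℂ :=
  hermCFC (fun x => if x = 0 then 0 else x⁻¹) A

/-- Orthogonal projection onto the range of a Hermitian matrix
(spectral projection onto the nonzero eigenvalues). -/
def rangeProj {n : ℕ} (A : Matrix (Fin n) (Fin n) ℂ) : Matrix (Fin n) (Fin n) ℂ :=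
  hermCFC (fun x => if x = 0 then 0 else 1) A

/-- `A ↦ (A⁺)^{1/2}`, the square root of the spectral pseudo-inverse. -/
def invSqrtMat {n : ℕ} (A : Matrix (Fin n) (Fin n) ℂ) : Matrix (Fin n) (Fin n) ℂ :=
  hermCFC (fun x => if x = 0 then 0 else (Real.sqrt x)⁻¹) A

/-- Generalized Schur complement of `σ0` with respect to a projection `π`:
`π σ0 π − π σ0 (1−π) · ((1−π) σ0 (1−π))⁺ · (1−π) σ0 π`. -/
def schurCompl {n : ℕ} (σ0 π : Matrix (Fin n) (Fin n) ℂ) :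
    Matrix (Fin n) (Fin n) ℂ :=
  π * σ0 * π -
    (π * σ0 * (1 - π)) * pinvMat ((1 - π) * σ0 * (1 - π)) * ((1 - π) * σ0 * π)

/-- `σ̃0`: the generalized Schur complement of `σ0` with respect to the
projection onto the range of `σ1`. -/
def sigmaTilde {n : ℕ} (σ0 σ1 : Matrix (Fin n) (Fin n) ℂ) :
    Matrix (Fin n) (Fin n) ℂ :=
  schurCompl σ0 (rangeProj σ1)

/-- The closed-form expression
`F_f(σ0,σ1) = tr σ1 f(σ1^{-1/2} σ̃0 σ1^{-1/2}) + (1 − tr σ̃0) L(f)`. -/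
def Ff {n : ℕ} (f : ℝ → ℝ) (σ0 σ1 : Matrix (Fin n) (Fin n) ℂ) : EReal :=
  (((σ1 * hermCFC f (invSqrtMat σ1 * sigmaTilde σ0 σ1 * invSqrtMat σ1)).trace.re : ℝ) : EReal)
    + ((1 - (sigmaTilde σ0 σ1).trace.re : ℝ) : EReal) * recessionSlope f

/-- Operator convexity of a function on `[0,∞)`, via the spectral functional
calculus on positive semidefinite complex matrices. -/
def OperatorConvex (f : ℝ → ℝ) : Prop :=
  ∀ (n : ℕ) (A B : Matrix (Fin n) (Fin n) ℂ), A.PosSemidef → B.PosSemidef →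
    ∀ t : ℝ, 0 ≤ t → t ≤ 1 →
      (t • hermCFC f A + (1 - t) • hermCFC f B
        - hermCFC f (t • A + (1 - t) • B)).PosSemidef

/-- A CPTP map between matrix algebras: trace preserving and with positive
semidefinite Choi matrix. -/
def IsCPTP {n k : ℕ}
    (Λ : Matrix (Fin n) (Fin n) ℂ →ₗ[ℂ] Matrix (Fin k) (Fin k) ℂ) : Prop :=
  (∀ A, (Λ A).trace = A.trace) ∧
    (∑ i : Fin n, ∑ j : Fin n,
      (Λ (Matrix.single i j 1)) ⊗ₖ (Matrix.single i j (1 : ℂ))).PosSemidef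

/-- The largest eigenvalue of a Hermitian matrix (junk value `0` otherwise). -/
def lmax {k : ℕ} (W : Matrix (Fin k) (Fin k) ℂ) : ℝ :=
  if h : W.IsHermitian then ⨆ i, h.eigenvalues i else 0

/-- A stochastic matrix (`P y x` is the probability of `y` given `x`). -/
def IsStochastic {X Y : Type*} [Fintype X] [Fintype Y] (P : Y → X → ℝ) : Prop :=
  (∀ y x, 0 ≤ P y x) ∧ ∀ x, ∑ y, P y x = 1

/-- The action of a stochastic matrix on a probability vector. -/
def stocApply {X Y : Type*} [Fintype X] [Fintype Y] (P : Y → X → ℝ)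
    (p : X → ℝ) : Y → ℝ :=
  fun y => ∑ x, P y x * p x

end

section MyHelpers
open Matrix Polynomial
noncomputable section

/-- conjugation by a unitary is an ℝ-algebra hom -/
def conjAH {m : ℕ} (W : Matrix (Fin m) (Fin m) ℂ) (hW : W * Wᴴ = 1) :
    Matrix (Fin m) (Fin m) ℂ →ₐ[ℝ] Matrix (Fin m) (Fin m) ℂ where
  toFun X := W * X * Wᴴ
  map_one' := by show W * 1 * Wᴴ = 1; rw [mul_one, hW]
  map_mul' X Y := by
    have hW' : Wᴴ * W = 1 := mul_eq_one_comm.mp hW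
    calc W * (X * Y) * Wᴴ = W * X * (Wᴴ * W) * Y * Wᴴ := by rw [hW']; noncomm_ring
      _ = W * X * Wᴴ * (W * Y * Wᴴ) := by noncomm_ring
  map_zero' := by simp
  map_add' X Y := by noncomm_ring
  commutes' r := by
    show W * algebraMap ℝ (Matrix (Fin m) (Fin m) ℂ) r * Wᴴ = _
    rw [Algebra.algebraMap_eq_smul_one, Matrix.mul_smul, mul_one, Matrix.smul_mul, hW]

lemma hermCFC_conj_diag {m : ℕ} (f : ℝ → ℝ) (U : Matrix (Fin m) (Fin m) ℂ)
    (hU : U * Uᴴ = 1) (d : Fin m → ℝ) :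
    hermCFC f (U * Matrix.diagonal (fun i => (d i : ℂ)) * Uᴴ)
      = U * Matrix.diagonal (fun i => (f (d i) : ℂ)) * Uᴴ := by
  classical
  set M := U * Matrix.diagonal (fun i => (d i : ℂ)) * Uᴴ with hMdef
  have hM : M.IsHermitian := by
    have hstar : star (fun i => ((d i : ℝ) : ℂ)) = fun i => ((d i : ℝ) : ℂ) := by
      funext i
      simp [Complex.conj_ofReal]
    have hdg : (Matrix.diagonal (fun i => ((d i : ℝ) : ℂ))).IsHermitian := by
      rw [Matrix.IsHermitian, Matrix.diagonal_conjTranspose, hstar]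
    rw [Matrix.IsHermitian, hMdef]
    simp only [Matrix.conjTranspose_mul, Matrix.conjTranspose_conjTranspose, hdg.eq]
    rw [Matrix.mul_assoc]
  set S : Finset ℝ := (Finset.univ.image d) ∪ (Finset.univ.image hM.eigenvalues) with hS
  set p : Polynomial ℝ := Lagrange.interpolate S id f with hp
  have hpev : ∀ x ∈ S, p.eval x = f x := by
    intro x hx
    have := Lagrange.eval_interpolate_at_node f (Set.injOn_id _) hx
    simpa [hp] using this
  have key : ∀ (W : Matrix (Fin m) (Fin m) ℂ), W * Wᴴ = 1 → ∀ (e : Fin m → ℝ),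
      (∀ i, e i ∈ S) → M = W * Matrix.diagonal (fun i => (e i : ℂ)) * Wᴴ →
      W * Matrix.diagonal (fun i => (f (e i) : ℂ)) * Wᴴ = Polynomial.aeval M p := by
    intro W hW e he hMe
    have h1 : Polynomial.aeval M p
        = W * (Matrix.diagonal fun i => Polynomial.aeval ((e i : ℂ)) p) * Wᴴ := by
      rw [hMe]
      rw [show W * Matrix.diagonal (fun i => (e i : ℂ)) * Wᴴ
          = conjAH W hW (Matrix.diagonal fun i => (e i : ℂ)) from rfl]
      rw [Polynomial.aeval_algHom_apply]
      rw [show (Matrix.diagonal fun i => (e i : ℂ))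
          = Matrix.diagonalAlgHom (n := Fin m) (α := ℂ) ℝ (fun i => (e i : ℂ)) from rfl]
      rw [Polynomial.aeval_algHom_apply]
      show W * (Matrix.diagonalAlgHom (n := Fin m) (α := ℂ) ℝ
          ((Polynomial.aeval fun i => ((e i : ℝ) : ℂ)) p)) * Wᴴ = _
      have h4 : Matrix.diagonalAlgHom (n := Fin m) (α := ℂ) ℝ
            ((Polynomial.aeval fun i => ((e i : ℝ) : ℂ)) p)
          = Matrix.diagonal fun i => Polynomial.aeval ((e i : ℝ) : ℂ) p := by
        have h5 : ((Polynomial.aeval fun i => ((e i : ℝ) : ℂ)) p)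
            = fun i => Polynomial.aeval ((e i : ℝ) : ℂ) p :=
          funext fun i => (Polynomial.aeval_algHom_apply
            (Pi.evalAlgHom ℝ (fun _ : Fin m => ℂ) i) (fun j => ((e j : ℝ) : ℂ)) p).symm
        show Matrix.diagonal _ = Matrix.diagonal _
        rw [h5]
      rw [h4]
    rw [h1]
    have h3 : (fun i => Polynomial.aeval ((e i : ℝ) : ℂ) p) = fun i => ((f (e i) : ℝ) : ℂ) := by
      funext i
      rw [show ((e i : ℝ) : ℂ) = (Algebra.ofId ℝ ℂ) (e i) from rfl,
        Polynomial.aeval_algHom_apply]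
      rw [show ((Polynomial.aeval (e i)) p) = p.eval (e i) from
        congrFun (Polynomial.coe_aeval_eq_eval (e i)) p]
      rw [hpev (e i) (he i)]
      simp [Algebra.ofId_apply]
    rw [h3]
  have hUnit : (hM.eigenvectorUnitary : Matrix (Fin m) (Fin m) ℂ)
      * (hM.eigenvectorUnitary : Matrix (Fin m) (Fin m) ℂ)ᴴ = 1 := by
    rw [← Matrix.star_eq_conjTranspose]
    exact Matrix.mem_unitaryGroup_iff.mp hM.eigenvectorUnitary.2
  have hspec : M = (hM.eigenvectorUnitary : Matrix (Fin m) (Fin m) ℂ)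
      * Matrix.diagonal (fun i => ((hM.eigenvalues i : ℝ) : ℂ))
      * (hM.eigenvectorUnitary : Matrix (Fin m) (Fin m) ℂ)ᴴ := by
    rw [← Matrix.star_eq_conjTranspose]
    exact hM.spectral_theorem
  have hA := key _ hUnit hM.eigenvalues
    (fun i => Finset.mem_union_right _ (Finset.mem_image_of_mem _ (Finset.mem_univ i))) hspec
  have hB := key U hU d
    (fun i => Finset.mem_union_left _ (Finset.mem_image_of_mem _ (Finset.mem_univ i))) rfl
  rw [hermCFC, dif_pos hM, Matrix.star_eq_conjTranspose]
  rw [hA, hB]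

open scoped ComplexOrder

section Helpers

variable {a b m : ℕ}

lemma reindex_diag (e : (Fin a ⊕ Fin b) ≃ Fin (a+b)) (v : Fin a ⊕ Fin b → ℂ) :
    (Matrix.reindex e e (Matrix.diagonal v)) = Matrix.diagonal (v ∘ e.symm) := by
  ext i j
  simp [Matrix.reindex_apply, Matrix.submatrix_apply, Matrix.diagonal_apply,
    e.symm.injective.eq_iff]

lemma reindex_mul (e : (Fin a ⊕ Fin b) ≃ Fin (a+b))
    (M N : Matrix (Fin a ⊕ Fin b) (Fin a ⊕ Fin b) ℂ) :
    Matrix.reindex e e M * Matrix.reindex e e N = Matrix.reindex e e (M * N) := by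
  simp [Matrix.reindex_apply, Matrix.submatrix_mul_equiv]

lemma reindex_one (e : (Fin a ⊕ Fin b) ≃ Fin (a+b)) :
    Matrix.reindex e e (1 : Matrix (Fin a ⊕ Fin b) (Fin a ⊕ Fin b) ℂ) = 1 := by
  simp [Matrix.reindex_apply]

lemma reindex_CT (e : (Fin a ⊕ Fin b) ≃ Fin (a+b))
    (M : Matrix (Fin a ⊕ Fin b) (Fin a ⊕ Fin b) ℂ) :
    (Matrix.reindex e e M)ᴴ = Matrix.reindex e e Mᴴ := by
  simp [Matrix.reindex_apply]

lemma reindex_psd (e : (Fin a ⊕ Fin b) ≃ Fin (a+b))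
    (M : Matrix (Fin a ⊕ Fin b) (Fin a ⊕ Fin b) ℂ)
    (hM : M.PosSemidef) : (Matrix.reindex e e M).PosSemidef := by
  simpa [Matrix.reindex_apply] using hM.submatrix e.symm

/-- conjugating a "sum-indexed" diagonal by a block-diagonal unitary, after reindexing -/
lemma conj_fromBlocks_diag (e : (Fin a ⊕ Fin b) ≃ Fin (a+b))
    (U₁ : Matrix (Fin a) (Fin a) ℂ) (U₂ : Matrix (Fin b) (Fin b) ℂ)
    (v₁ : Fin a → ℝ) (v₂ : Fin b → ℝ) :
    (Matrix.reindex e e (Matrix.fromBlocks U₁ 0 0 U₂))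
      * Matrix.diagonal (fun i => ((Sum.elim v₁ v₂ (e.symm i) : ℝ) : ℂ))
      * (Matrix.reindex e e (Matrix.fromBlocks U₁ 0 0 U₂))ᴴ
    = Matrix.reindex e e (Matrix.fromBlocks
        (U₁ * Matrix.diagonal (fun i => ((v₁ i : ℝ) : ℂ)) * U₁ᴴ) 0 0
        (U₂ * Matrix.diagonal (fun i => ((v₂ i : ℝ) : ℂ)) * U₂ᴴ)) := by
  have hd : Matrix.diagonal (fun i => ((Sum.elim v₁ v₂ (e.symm i) : ℝ) : ℂ))
      = Matrix.reindex e e (Matrix.diagonal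
          (Sum.elim (fun i => ((v₁ i : ℝ) : ℂ)) (fun j => ((v₂ j : ℝ) : ℂ)))) := by
    have hcoe : (fun s : Fin a ⊕ Fin b => ((Sum.elim v₁ v₂ s : ℝ) : ℂ))
        = Sum.elim (fun i => ((v₁ i : ℝ) : ℂ)) (fun j => ((v₂ j : ℝ) : ℂ)) := by
      funext s; cases s <;> rfl
    rw [reindex_diag, Matrix.diagonal_eq_diagonal_iff]
    intro i
    exact congrFun hcoe (e.symm i)
  rw [hd, reindex_CT, reindex_mul, reindex_mul]
  congr 1
  rw [Matrix.fromBlocks_conjTranspose, ← Matrix.fromBlocks_diagonal,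
    Matrix.fromBlocks_multiply, Matrix.fromBlocks_multiply]
  simp

lemma hermCFC_conj_unitary (f : ℝ → ℝ) (Us M : Matrix (Fin m) (Fin m) ℂ)
    (hU : Us * Usᴴ = 1) (hM : M.IsHermitian) :
    hermCFC f (Usᴴ * M * Us) = Usᴴ * hermCFC f M * Us := by
  have hU' : Usᴴ * Us = 1 := mul_eq_one_comm.mp hU
  set W : Matrix (Fin m) (Fin m) ℂ := ↑hM.eigenvectorUnitary with hWdef
  have hWu : W * Wᴴ = 1 := by
    rw [← Matrix.star_eq_conjTranspose]
    exact Matrix.mem_unitaryGroup_iff.mp hM.eigenvectorUnitary.2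
  have hspec : M = W * Matrix.diagonal (fun i => ((hM.eigenvalues i : ℝ) : ℂ)) * Wᴴ := by
    rw [← Matrix.star_eq_conjTranspose]
    exact hM.spectral_theorem
  have h2 : (Usᴴ * W) * (Usᴴ * W)ᴴ = 1 := by
    rw [Matrix.conjTranspose_mul, Matrix.conjTranspose_conjTranspose]
    calc Usᴴ * W * (Wᴴ * Us) = Usᴴ * (W * Wᴴ) * Us := by noncomm_ring
      _ = 1 := by rw [hWu, mul_one, hU']
  have h1 : Usᴴ * M * Us
      = (Usᴴ * W) * Matrix.diagonal (fun i => ((hM.eigenvalues i : ℝ) : ℂ)) * (Usᴴ * W)ᴴ := by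
    rw [Matrix.conjTranspose_mul, Matrix.conjTranspose_conjTranspose]
    nth_rewrite 1 [hspec]
    noncomm_ring
  rw [h1, hermCFC_conj_diag f _ h2]
  rw [hermCFC, dif_pos hM, Matrix.star_eq_conjTranspose, ← hWdef,
    Matrix.conjTranspose_mul, Matrix.conjTranspose_conjTranspose]
  noncomm_ring

lemma hermCFC_zero (f : ℝ → ℝ) :
    hermCFC f (0 : Matrix (Fin m) (Fin m) ℂ) = Matrix.diagonal (fun _ => (f 0 : ℂ)) := by
  have h := hermCFC_conj_diag f (1 : Matrix (Fin m) (Fin m) ℂ) (by simp) (fun _ => 0)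
  simpa using h

lemma hermCFC_fromBlocks (f : ℝ → ℝ)
    (X : Matrix (Fin a) (Fin a) ℂ) (Y : Matrix (Fin b) (Fin b) ℂ)
    (hX : X.IsHermitian) (hY : Y.IsHermitian)
    (e : (Fin a ⊕ Fin b) ≃ Fin (a+b)) :
    hermCFC f (Matrix.reindex e e (Matrix.fromBlocks X 0 0 Y))
      = Matrix.reindex e e (Matrix.fromBlocks (hermCFC f X) 0 0 (hermCFC f Y)) := by
  set U₁ : Matrix (Fin a) (Fin a) ℂ := ↑hX.eigenvectorUnitary with hU₁def
  set U₂ : Matrix (Fin b) (Fin b) ℂ := ↑hY.eigenvectorUnitary with hU₂def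
  have hU₁ : U₁ * U₁ᴴ = 1 := by
    rw [← Matrix.star_eq_conjTranspose]
    exact Matrix.mem_unitaryGroup_iff.mp hX.eigenvectorUnitary.2
  have hU₂ : U₂ * U₂ᴴ = 1 := by
    rw [← Matrix.star_eq_conjTranspose]
    exact Matrix.mem_unitaryGroup_iff.mp hY.eigenvectorUnitary.2
  have hspecX : X = U₁ * Matrix.diagonal (fun i => ((hX.eigenvalues i : ℝ) : ℂ)) * U₁ᴴ := by
    rw [← Matrix.star_eq_conjTranspose]; exact hX.spectral_theorem
  have hspecY : Y = U₂ * Matrix.diagonal (fun i => ((hY.eigenvalues i : ℝ) : ℂ)) * U₂ᴴ := by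
    rw [← Matrix.star_eq_conjTranspose]; exact hY.spectral_theorem
  set Ub := Matrix.reindex e e (Matrix.fromBlocks U₁ 0 0 U₂) with hUbdef
  have hUb : Ub * Ubᴴ = 1 := by
    rw [hUbdef, reindex_CT, reindex_mul, Matrix.fromBlocks_conjTranspose,
      Matrix.fromBlocks_multiply]
    simp only [Matrix.conjTranspose_zero, Matrix.mul_zero, Matrix.zero_mul, add_zero,
      zero_add, hU₁, hU₂]
    rw [Matrix.fromBlocks_one, reindex_one]
  have harg : Matrix.reindex e e (Matrix.fromBlocks X 0 0 Y)
      = Ub * Matrix.diagonal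
          (fun i => ((Sum.elim hX.eigenvalues hY.eigenvalues (e.symm i) : ℝ) : ℂ)) * Ubᴴ := by
    rw [hUbdef, conj_fromBlocks_diag, ← hspecX, ← hspecY]
  rw [harg, hermCFC_conj_diag f Ub hUb]
  have hfun : (fun i => ((f (Sum.elim hX.eigenvalues hY.eigenvalues (e.symm i)) : ℝ) : ℂ))
      = fun i => ((Sum.elim (fun i => f (hX.eigenvalues i)) (fun j => f (hY.eigenvalues j))
          (e.symm i) : ℝ) : ℂ) := by
    funext i
    cases hs : e.symm i <;> rfl
  rw [show (Matrix.diagonal fun i => ((f (Sum.elim hX.eigenvalues hY.eigenvalues (e.symm i)) : ℝ) : ℂ))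
      = Matrix.diagonal (fun i => ((Sum.elim (fun i => f (hX.eigenvalues i))
          (fun j => f (hY.eigenvalues j)) (e.symm i) : ℝ) : ℂ)) from by rw [hfun]]
  rw [hUbdef, conj_fromBlocks_diag]
  congr 1
  have hfX : hermCFC f X = U₁ * Matrix.diagonal (fun i => ((f (hX.eigenvalues i) : ℝ) : ℂ)) * U₁ᴴ := by
    rw [hermCFC, dif_pos hX, Matrix.star_eq_conjTranspose, ← hU₁def]
  have hfY : hermCFC f Y = U₂ * Matrix.diagonal (fun i => ((f (hY.eigenvalues i) : ℝ) : ℂ)) * U₂ᴴ := by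
    rw [hermCFC, dif_pos hY, Matrix.star_eq_conjTranspose, ← hU₂def]
  rw [hfX, hfY]

end Helpers

section Helpers2
variable {a b m p q : ℕ}

lemma psd_fromBlocks {A : Matrix (Fin a) (Fin a) ℂ} {B : Matrix (Fin b) (Fin b) ℂ}
    (hA : A.PosSemidef) (hB : B.PosSemidef) :
    (Matrix.fromBlocks A (0 : Matrix (Fin a) (Fin b) ℂ) (0 : Matrix (Fin b) (Fin a) ℂ)
      B).PosSemidef := by
  have hsq : ∀ {c : ℕ} (M : Matrix (Fin c) (Fin c) ℂ), M.PosSemidef →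
      ∃ S : Matrix (Fin c) (Fin c) ℂ, Sᴴ * S = M := by
    intro c M hM
    open scoped MatrixOrder in
    exact ⟨CFC.sqrt M, by
      rw [← Matrix.star_eq_conjTranspose, (CFC.sqrt_nonneg M).isSelfAdjoint.star_eq,
        CFC.sqrt_mul_sqrt_self M hM.nonneg]⟩
  obtain ⟨SA, hSA⟩ := hsq A hA
  obtain ⟨SB, hSB⟩ := hsq B hB
  have h : Matrix.fromBlocks A 0 0 B
      = (Matrix.fromBlocks SA 0 0 SB)ᴴ * (Matrix.fromBlocks SA 0 0 SB) := by
    rw [Matrix.fromBlocks_conjTranspose, Matrix.fromBlocks_multiply]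
    simp only [Matrix.conjTranspose_zero, Matrix.mul_zero, Matrix.zero_mul, add_zero, zero_add]
    rw [hSA, hSB]
  rw [h]
  exact Matrix.posSemidef_conjTranspose_mul_self _

lemma coe_smul_mat (t : ℝ) (M : Matrix (Fin p) (Fin q) ℂ) : ((t : ℝ) : ℂ) • M = t • M := by
  ext i j
  simp [Matrix.smul_apply, Complex.real_smul]

lemma compress_eq (e : (Fin a ⊕ Fin b) ≃ Fin (a+b))
    (Vc : Matrix (Fin a ⊕ Fin b) (Fin p) ℂ) (N : Matrix (Fin a ⊕ Fin b) (Fin a ⊕ Fin b) ℂ) :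
    (Vc.submatrix ⇑e.symm id)ᴴ * (Matrix.reindex e e N) * (Vc.submatrix ⇑e.symm id)
      = Vcᴴ * N * Vc := by
  rw [Matrix.conjTranspose_submatrix, Matrix.reindex_apply, Matrix.submatrix_mul_equiv,
    Matrix.submatrix_mul_equiv, Matrix.submatrix_id_id]

lemma compress_id (e : (Fin a ⊕ Fin b) ≃ Fin (a+b))
    (Vc : Matrix (Fin a ⊕ Fin b) (Fin p) ℂ) :
    (Vc.submatrix ⇑e.symm id)ᴴ * (Vc.submatrix ⇑e.symm id) = Vcᴴ * Vc := by
  rw [Matrix.conjTranspose_submatrix, Matrix.submatrix_mul_equiv, Matrix.submatrix_id_id]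

lemma psd_block22 (e : (Fin a ⊕ Fin b) ≃ Fin (a+b))
    (M : Matrix (Fin a ⊕ Fin b) (Fin a ⊕ Fin b) ℂ)
    (h : (Matrix.reindex e e M).PosSemidef) : (M.toBlocks₂₂).PosSemidef := by
  have h2 := h.submatrix (fun i : Fin b => e (Sum.inr i))
  have h3 : (Matrix.reindex e e M).submatrix (fun i : Fin b => e (Sum.inr i))
      (fun i : Fin b => e (Sum.inr i)) = M.toBlocks₂₂ := by
    ext i j
    simp [Matrix.reindex_apply, Matrix.submatrix_apply, Matrix.toBlocks₂₂]
  rwa [h3] at h2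

lemma reindex_comb (e : (Fin a ⊕ Fin b) ≃ Fin (a+b)) (t : ℝ)
    (M N P : Matrix (Fin a ⊕ Fin b) (Fin a ⊕ Fin b) ℂ) :
    t • Matrix.reindex e e M + t • Matrix.reindex e e N - Matrix.reindex e e P
      = Matrix.reindex e e (t • M + t • N - P) := by
  simp [Matrix.reindex_apply, Matrix.submatrix_add, Matrix.submatrix_smul, Matrix.submatrix_sub]

lemma reindex_two_smul (e : (Fin a ⊕ Fin b) ≃ Fin (a+b)) (t : ℝ)
    (M N : Matrix (Fin a ⊕ Fin b) (Fin a ⊕ Fin b) ℂ) :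
    t • Matrix.reindex e e M + t • Matrix.reindex e e N = Matrix.reindex e e (t • M + t • N) := by
  simp [Matrix.reindex_apply, Matrix.submatrix_add, Matrix.submatrix_smul]

end Helpers2

end
end MyHelpers

/-- A continuous `f : [0,∞) → ℝ` is operator convex iff
`f(V*AV) ≼ V* f(A) V` for every isometry `V : ℂ^n → ℂ^k` (`n ≤ k`) and every
positive semidefinite `A`. -/
theorem operatorConvex_iff_isometry_compression (f : ℝ → ℝ)
    (hf : ContinuousOn f (Set.Ici 0)) :
    OperatorConvex f ↔
      ∀ (n k : ℕ), 0 < n → n ≤ k →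
        ∀ V : Matrix (Fin k) (Fin n) ℂ, Vᴴ * V = 1 →
          ∀ A : Matrix (Fin k) (Fin k) ℂ, A.PosSemidef →
            (Vᴴ * hermCFC f A * V - hermCFC f (Vᴴ * A * V)).PosSemidef := by
  constructor
  · -- forward direction
    intro hOC n k hn hnk V hV A hA
    set e := finSumFinEquiv (m := k) (n := n) with hedef
    have hAH : A.IsHermitian := hA.1
    set D : Matrix (Fin k) (Fin k) ℂ := 1 - V * Vᴴ with hDdef
    have hDH : Dᴴ = D := by
      rw [hDdef]
      simp [Matrix.conjTranspose_sub, Matrix.conjTranspose_mul]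
    have hDV : D * V = 0 := by
      rw [hDdef, Matrix.sub_mul, Matrix.one_mul, Matrix.mul_assoc, hV, Matrix.mul_one, sub_self]
    have hVD : Vᴴ * D = 0 := by
      rw [hDdef, Matrix.mul_sub, Matrix.mul_one, ← Matrix.mul_assoc, hV, Matrix.one_mul, sub_self]
    have hPP : V * Vᴴ * (V * Vᴴ) = V * Vᴴ := by
      rw [Matrix.mul_assoc V Vᴴ (V * Vᴴ), ← Matrix.mul_assoc Vᴴ V Vᴴ, hV, Matrix.one_mul]
    have hDD : D * D = D := by
      rw [hDdef, Matrix.sub_mul, Matrix.one_mul, Matrix.mul_sub, Matrix.mul_one, hPP,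
        sub_self, sub_zero]
    have hDVV : D * D + V * Vᴴ = 1 := by
      rw [hDD, hDdef]
      abel
    set U : Matrix (Fin k ⊕ Fin n) (Fin k ⊕ Fin n) ℂ :=
      Matrix.fromBlocks D V (-Vᴴ) 0 with hUdef
    have hUct : Uᴴ = Matrix.fromBlocks D (-V) Vᴴ 0 := by
      rw [hUdef, Matrix.fromBlocks_conjTranspose, hDH, Matrix.conjTranspose_neg,
        Matrix.conjTranspose_conjTranspose, Matrix.conjTranspose_zero]
    have hUU : U * Uᴴ = 1 := by
      rw [hUdef, hUct, Matrix.fromBlocks_multiply]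
      simp only [Matrix.mul_neg, Matrix.neg_mul, neg_neg, hDV, hVD, hV, Matrix.mul_zero,
        Matrix.zero_mul, neg_zero, add_zero, zero_add, hDVV]
      rw [Matrix.fromBlocks_one]
    set U' := Matrix.reindex e e U with hU'def
    have hU'U : U' * U'ᴴ = 1 := by
      rw [hU'def, reindex_CT, reindex_mul, hUU, reindex_one]
    set Ab : Matrix (Fin k ⊕ Fin n) (Fin k ⊕ Fin n) ℂ := Matrix.fromBlocks A 0 0 0 with hAbdef
    have hAbPSD : Ab.PosSemidef := psd_fromBlocks hA Matrix.PosSemidef.zero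
    set Abig := Matrix.reindex e e Ab with hAbig
    have hAbigPSD : Abig.PosSemidef := reindex_psd e _ hAbPSD
    have hM1psd : (Matrix.reindex e e (Uᴴ * Ab * U)).PosSemidef :=
      reindex_psd e _ (hAbPSD.conjTranspose_mul_mul_same U)
    have hM2psd : (Matrix.reindex e e (U * Ab * Uᴴ)).PosSemidef :=
      reindex_psd e _ (hAbPSD.mul_mul_conjTranspose_same U)
    have hΔ := hOC (k + n) _ _ hM1psd hM2psd (1/2) (by norm_num) (by norm_num)
    rw [show (1 : ℝ) - 1/2 = 1/2 by norm_num] at hΔ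
    have hreX : Matrix.reindex e e (Uᴴ * Ab * U) = U'ᴴ * Abig * U' := by
      rw [hU'def, hAbig, reindex_CT, reindex_mul, reindex_mul]
    have hreY : Matrix.reindex e e (U * Ab * Uᴴ) = U' * Abig * U'ᴴ := by
      rw [hU'def, hAbig, reindex_CT, reindex_mul, reindex_mul]
    set G := hermCFC f A with hG
    set C : Matrix (Fin n) (Fin n) ℂ := Matrix.diagonal (fun _ => (f 0 : ℂ)) with hC
    have hFbig : hermCFC f Abig = Matrix.reindex e e (Matrix.fromBlocks G 0 0 C) := by
      rw [hAbig, hAbdef, hermCFC_fromBlocks f A 0 hAH Matrix.isHermitian_zero e, hermCFC_zero]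
    have h1 : hermCFC f (Matrix.reindex e e (Uᴴ * Ab * U))
        = Matrix.reindex e e (Uᴴ * (Matrix.fromBlocks G 0 0 C) * U) := by
      rw [hreX, hermCFC_conj_unitary f U' Abig hU'U hAbigPSD.1, hFbig, hU'def, reindex_CT,
        reindex_mul, reindex_mul]
    have h2 : hermCFC f (Matrix.reindex e e (U * Ab * Uᴴ))
        = Matrix.reindex e e (U * (Matrix.fromBlocks G 0 0 C) * Uᴴ) := by
      have hU'U2 : U'ᴴ * (U'ᴴ)ᴴ = 1 := by
        rw [Matrix.conjTranspose_conjTranspose]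
        exact mul_eq_one_comm.mp hU'U
      have hcu := hermCFC_conj_unitary f U'ᴴ Abig hU'U2 hAbigPSD.1
      rw [Matrix.conjTranspose_conjTranspose] at hcu
      rw [hreY, hcu, hFbig, hU'def, reindex_CT, reindex_mul, reindex_mul]
    have hM1b : Uᴴ * Ab * U
        = Matrix.fromBlocks (D*A*D) (D*A*V) (Vᴴ*A*D) (Vᴴ*A*V) := by
      rw [hUct, hAbdef, hUdef, Matrix.fromBlocks_multiply, Matrix.fromBlocks_multiply]
      simp only [Matrix.mul_zero, Matrix.zero_mul, Matrix.mul_neg, Matrix.neg_mul, neg_zero,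
        add_zero, zero_add, neg_neg]
    have hM2b : U * Ab * Uᴴ
        = Matrix.fromBlocks (D*A*D) (-(D*A*V)) (-(Vᴴ*A*D)) (Vᴴ*A*V) := by
      rw [hUct, hAbdef, hUdef, Matrix.fromBlocks_multiply, Matrix.fromBlocks_multiply]
      simp only [Matrix.mul_zero, Matrix.zero_mul, Matrix.mul_neg, Matrix.neg_mul, neg_zero,
        add_zero, zero_add, neg_neg]
    have hhalf : ∀ (p q : ℕ) (X : Matrix (Fin p) (Fin q) ℂ), (1/2:ℝ)•X + (1/2:ℝ)•X = X := by
      intro p q X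
      rw [← add_smul]
      norm_num
    have hhalfneg : ∀ (p q : ℕ) (X : Matrix (Fin p) (Fin q) ℂ),
        (1/2:ℝ)•X + (1/2:ℝ)•(-X) = 0 := by
      intro p q X
      rw [smul_neg]
      abel
    have havg2 : (1/2:ℝ) • (Uᴴ * Ab * U) + (1/2:ℝ) • (U * Ab * Uᴴ)
        = Matrix.fromBlocks (D*A*D) 0 0 (Vᴴ*A*V) := by
      rw [hM1b, hM2b, Matrix.fromBlocks_smul, Matrix.fromBlocks_smul, Matrix.fromBlocks_add]
      rw [hhalf, hhalf, hhalfneg, hhalfneg]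
    have hDADherm : (D*A*D).IsHermitian := by
      have h := Matrix.isHermitian_conjTranspose_mul_mul D hAH
      rwa [hDH] at h
    have hVAVherm : (Vᴴ*A*V).IsHermitian := Matrix.isHermitian_conjTranspose_mul_mul V hAH
    have h3 : hermCFC f ((1/2:ℝ) • Matrix.reindex e e (Uᴴ * Ab * U)
          + (1/2:ℝ) • Matrix.reindex e e (U * Ab * Uᴴ))
        = Matrix.reindex e e (Matrix.fromBlocks (hermCFC f (D*A*D)) 0 0 (hermCFC f (Vᴴ*A*V))) := by
      rw [reindex_two_smul, havg2, hermCFC_fromBlocks f _ _ hDADherm hVAVherm e]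
    rw [h1, h2, h3, reindex_comb] at hΔ
    have hFbU : Uᴴ * (Matrix.fromBlocks G 0 0 C) * U
        = Matrix.fromBlocks (D*G*D + V*C*Vᴴ) (D*G*V) (Vᴴ*G*D) (Vᴴ*G*V) := by
      rw [hUct, hUdef, Matrix.fromBlocks_multiply, Matrix.fromBlocks_multiply]
      simp only [Matrix.mul_zero, Matrix.zero_mul, Matrix.mul_neg, Matrix.neg_mul, neg_zero,
        add_zero, zero_add, neg_neg]
    have hFbUH : U * (Matrix.fromBlocks G 0 0 C) * Uᴴ
        = Matrix.fromBlocks (D*G*D + V*C*Vᴴ) (-(D*G*V)) (-(Vᴴ*G*D)) (Vᴴ*G*V) := by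
      rw [hUct, hUdef, Matrix.fromBlocks_multiply, Matrix.fromBlocks_multiply]
      simp only [Matrix.mul_zero, Matrix.zero_mul, Matrix.mul_neg, Matrix.neg_mul, neg_zero,
        add_zero, zero_add, neg_neg]
    have hcomb : (1/2:ℝ) • (Uᴴ * (Matrix.fromBlocks G 0 0 C) * U)
          + (1/2:ℝ) • (U * (Matrix.fromBlocks G 0 0 C) * Uᴴ)
          - Matrix.fromBlocks (hermCFC f (D*A*D)) 0 0 (hermCFC f (Vᴴ*A*V))
        = Matrix.fromBlocks (D*G*D + V*C*Vᴴ - hermCFC f (D*A*D)) 0 0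
            (Vᴴ*G*V - hermCFC f (Vᴴ*A*V)) := by
      rw [hFbU, hFbUH, Matrix.fromBlocks_smul, Matrix.fromBlocks_smul, Matrix.fromBlocks_add,
        hhalf, hhalf, hhalfneg, hhalfneg, sub_eq_add_neg, Matrix.fromBlocks_neg,
        Matrix.fromBlocks_add]
      simp only [neg_zero, add_zero, ← sub_eq_add_neg]
    rw [hcomb] at hΔ
    have hfinal := psd_block22 e _ hΔ
    rw [Matrix.toBlocks_fromBlocks₂₂] at hfinal
    exact hfinal
  · -- backward direction
    intro H n A B hA hB t ht0 ht1
    rcases Nat.eq_zero_or_pos n with hn | hn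
    · subst hn
      refine ⟨Matrix.ext fun i j => i.elim0, fun x => ?_⟩
      simp [Finsupp.sum, Subsingleton.elim x 0]
    · set e := finSumFinEquiv (m := n) (n := n) with hedef
      set aR := Real.sqrt t with haR
      set bR := Real.sqrt (1 - t) with hbR
      have haa : ((aR : ℝ) : ℂ) * ((aR : ℝ) : ℂ) = ((t : ℝ) : ℂ) := by
        rw [← Complex.ofReal_mul, haR, Real.mul_self_sqrt ht0]
      have hbb : ((bR : ℝ) : ℂ) * ((bR : ℝ) : ℂ) = ((1 - t : ℝ) : ℂ) := by
        rw [← Complex.ofReal_mul, hbR, Real.mul_self_sqrt (by linarith)]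
      set Vcol : Matrix (Fin n ⊕ Fin n) (Fin n) ℂ :=
        Matrix.fromRows (((aR : ℝ) : ℂ) • 1) (((bR : ℝ) : ℂ) • 1) with hVcol
      have hVcolH : Vcolᴴ
          = Matrix.fromCols (((aR : ℝ) : ℂ) • 1) (((bR : ℝ) : ℂ) • 1) := by
        rw [hVcol, Matrix.conjTranspose_fromRows_eq_fromCols_conjTranspose]
        congr 1 <;> simp [Matrix.conjTranspose_smul, Complex.conj_ofReal]
      have hVcolV : Vcolᴴ * Vcol = 1 := by
        rw [hVcolH, hVcol, Matrix.fromCols_mul_fromRows]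
        simp only [Matrix.smul_mul, Matrix.one_mul, smul_smul, haa, hbb]
        rw [← add_smul, show ((t : ℝ) : ℂ) + ((1 - t : ℝ) : ℂ) = 1 by push_cast; ring, one_smul]
      have hVcolNV : ∀ (G H : Matrix (Fin n) (Fin n) ℂ),
          Vcolᴴ * (Matrix.fromBlocks G 0 0 H) * Vcol = t • G + (1 - t) • H := by
        intro G H
        rw [Matrix.mul_assoc, hVcol, hVcolH, Matrix.fromBlocks_mul_fromRows,
          Matrix.fromCols_mul_fromRows]
        simp only [Matrix.mul_zero, Matrix.zero_mul, add_zero, zero_add, smul_zero, smul_add,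
          Matrix.mul_smul, Matrix.mul_one, Matrix.smul_mul, Matrix.one_mul, smul_smul, haa, hbb]
        rw [coe_smul_mat, coe_smul_mat]
      set V : Matrix (Fin (n + n)) (Fin n) ℂ := Vcol.submatrix ⇑e.symm id with hVdef
      have hVV : Vᴴ * V = 1 := by rw [hVdef, compress_id, hVcolV]
      set Big := Matrix.reindex e e (Matrix.fromBlocks A 0 0 B) with hBig
      have hBigPSD : Big.PosSemidef := reindex_psd e _ (psd_fromBlocks hA hB)
      have key := H n (n + n) hn (Nat.le_add_right n n) V hVV Big hBigPSD
      have h1 : Vᴴ * hermCFC f Big * V = t • hermCFC f A + (1 - t) • hermCFC f B := by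
        rw [hBig, hermCFC_fromBlocks f A B hA.1 hB.1 e, hVdef, compress_eq, hVcolNV]
      have h2 : Vᴴ * Big * V = t • A + (1 - t) • B := by
        rw [hBig, hVdef, compress_eq, hVcolNV]
      rwa [h1, h2] at key
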